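/- Let f : ℝ^n → ℂ be smooth and ℤ^n-periodic, let r ≥ 1 be an integer and C > 0 be such that for every subset S of {1,...,n} and every x ∈ ℝ^n one has |(∏_{i∈S} ∂^r/∂(x^i)^r) f(x)| ≤ C. Then for every m ∈ ℤ^n, |f̂_m| ≤ C·|N_m^r|. -/

import Mathlib

open MeasureTheory Complex
open scoped Real Pointwise

noncomputable section

/-- The unit box `[0,1]^n` in `ℝ^n`. -/
def box (n : ℕ) : Set (Fin n → ℝ) := Set.univ.pi fun _ => Set.Icc (0:ℝ) 1

/-- `ℤ^n`-periodicity of a function on `ℝ^n`. -/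
def IsPeriodic (n : ℕ) (f : (Fin n → ℝ) → ℂ) : Prop :=
  ∀ (x : Fin n → ℝ) (a : Fin n → ℤ), f (x + fun i => (a i : ℝ)) = f x

/-- The `m`-th Fourier coefficient `f̂_m = ∫_{[0,1]^n} f(x) e^{-2π√-1 m·x} dx`. -/
def fourierCo (n : ℕ) (f : (Fin n → ℝ) → ℂ) (m : Fin n → ℤ) : ℂ :=
  ∫ x in box n, f x * Complex.exp (-2 * π * Complex.I * ∑ i, (m i : ℂ) * (x i : ℂ))

/-- `N_m = ∏_{i : m_i ≠ 0} 1/(2π√-1 m_i)`. -/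
def Nm (n : ℕ) (m : Fin n → ℤ) : ℂ :=
  ∏ i ∈ Finset.univ.filter (fun i => m i ≠ 0), (1 / (2 * π * Complex.I * (m i : ℂ)))

/-- Partial derivative `∂/∂x^i`. -/
def pderiv1 (n : ℕ) (i : Fin n) (f : (Fin n → ℝ) → ℂ) : (Fin n → ℝ) → ℂ :=
  fun x => fderiv ℝ f x (Pi.single i (1:ℝ))

/-- The operator `∏_{i ∈ S} ∂^r/∂(x^i)^r`. -/
def derivPowOn (n r : ℕ) (S : Finset (Fin n)) (f : (Fin n → ℝ) → ℂ) : (Fin n → ℝ) → ℂ :=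
  (List.finRange n).foldr (fun i g => if i ∈ S then (pderiv1 n i)^[r] g else g) f

lemma box_compact (n : ℕ) : IsCompact (box n) :=
  isCompact_univ_pi fun _ => isCompact_Icc

lemma box_measurable (n : ℕ) : MeasurableSet (box n) :=
  MeasurableSet.univ_pi fun _ => measurableSet_Icc

lemma box_volume (n : ℕ) : volume (box n) = 1 := by
  rw [box, volume_pi_pi]
  simp [Real.volume_Icc]

lemma periodic_bounded {n : ℕ} {g : (Fin n → ℝ) → ℂ} (hg : Continuous g)
    (hp : IsPeriodic n g) : ∃ B : ℝ, 0 ≤ B ∧ ∀ x, ‖g x‖ ≤ B := by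
  obtain ⟨B, hB⟩ := (box_compact n).exists_bound_of_continuousOn hg.continuousOn
  refine ⟨max B 0, le_max_right _ _, fun x => ?_⟩
  have hy : (fun i => Int.fract (x i)) ∈ box n := by
    intro i _
    exact ⟨Int.fract_nonneg _, (Int.fract_lt_one _).le⟩
  have := hB _ hy
  have hx : x = (fun i => Int.fract (x i)) + fun i => ((⌊x i⌋ : ℤ) : ℝ) := by
    funext i; simp only [Pi.add_apply]; rw [Int.fract]; ring
  rw [hx, hp _ (fun i => ⌊x i⌋)]
  exact le_max_of_le_left this


/-- Translation invariance of the box integral for periodic functions. -/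
lemma integral_box_translate {n : ℕ} {g : (Fin n → ℝ) → ℂ}
    (hp : IsPeriodic n g) (v : Fin n → ℝ) :
    ∫ x in box n, g (x + v) = ∫ x in box n, g x := by
  set b := Pi.basisFun ℝ (Fin n) with hb
  set L := Submodule.span ℤ (Set.range (b : Fin n → (Fin n → ℝ))) with hL
  haveI : MeasurableVAdd (↥L) (Fin n → ℝ) :=
    @MeasurableVAdd.mk _ _ _ _ _ ⟨fun l => by
      have : Measurable fun y : Fin n → ℝ => (l : Fin n → ℝ) + y := measurable_const_add _
      exact this⟩
     (fun x => by
      have : Measurable fun l : L => (l : Fin n → ℝ) + x :=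
        (measurable_subtype_coe).add_const x
      exact this)
  haveI : VAddInvariantMeasure (↥L) (Fin n → ℝ) volume :=
    ⟨fun l s hs => by
      have : (fun y : Fin n → ℝ => l +ᵥ y) = fun y => (l : Fin n → ℝ) + y := rfl
      rw [this, measure_preimage_add]⟩
  haveI : MeasurableVAdd (Fin n → ℝ) (Fin n → ℝ) :=
    @MeasurableVAdd.mk _ _ _ _ _ ⟨fun l => by
      have : Measurable fun y : Fin n → ℝ => l + y := measurable_const_add _
      exact this⟩
     (fun x => by
      have : Measurable fun l : Fin n → ℝ => l + x := measurable_add_const _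
      exact this)
  haveI : VAddInvariantMeasure (Fin n → ℝ) (Fin n → ℝ) volume :=
    ⟨fun l s hs => by
      have : (fun y : Fin n → ℝ => l +ᵥ y) = fun y => l + y := rfl
      rw [this, measure_preimage_add]⟩
  have hfd : IsAddFundamentalDomain L (ZSpan.fundamentalDomain b) volume :=
    ZSpan.isAddFundamentalDomain b volume
  have hinv : ∀ (l : L) (x : Fin n → ℝ), g (l +ᵥ x) = g x := by
    rintro ⟨l, hl⟩ x
    rw [Module.Basis.mem_span_iff_repr_mem] at hl
    choose a ha using hl
    have hle : l = fun i => (a i : ℝ) := by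
      funext i
      have := ha i
      simpa [hb, algebraMap] using this.symm
    have h2 : (⟨l, hl⟩ : L) +ᵥ x = x + fun i => (a i : ℝ) := by
      show l + x = _
      rw [hle]; abel
    rw [h2, hp]
  have haeq : ZSpan.fundamentalDomain b =ᵐ[(volume : Measure (Fin n → ℝ))] box n := by
    rw [ZSpan.fundamentalDomain_pi_basisFun]
    have h := Measure.univ_pi_Ico_ae_eq_Icc (α := fun _ : Fin n => ℝ)
      (μ := fun _ => volume) (f := fun _ => (0:ℝ)) (g := fun _ => (1:ℝ))
    rw [← volume_pi] at h
    rw [box, Set.pi_univ_Icc]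
    exact h
  have hpre : ∀ s : Set (Fin n → ℝ), v +ᵥ s = (fun x => -v + x) ⁻¹' s := by
    intro s; ext x
    simp only [Set.mem_preimage, Set.mem_vadd_set_iff_neg_vadd_mem]
    rfl
  have haeq' : v +ᵥ ZSpan.fundamentalDomain b =ᵐ[(volume : Measure (Fin n → ℝ))] v +ᵥ box n := by
    rw [hpre, hpre]
    exact (measurePreserving_add_left volume (-v)).quasiMeasurePreserving.preimage_ae_eq haeq
  have key : ∫ x in v +ᵥ ZSpan.fundamentalDomain b, g x
      = ∫ x in ZSpan.fundamentalDomain b, g x := by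
    haveI : VAddCommClass (Fin n → ℝ) L (Fin n → ℝ) :=
      ⟨fun u l x => by show u + (↑l + x) = ↑l + (u + x); abel⟩
    exact (hfd.vadd_of_comm v).setIntegral_eq hfd hinv
  calc ∫ x in box n, g (x + v)
      = ∫ x in box n, g (v + x) := by congr 1; funext x; rw [add_comm]
    _ = ∫ x in (fun x => v + x) ⁻¹' ((fun x => v + x) '' box n), g (v + x) := by
        rw [Set.preimage_image_eq _ (add_right_injective v)]
    _ = ∫ x in (fun x => v + x) '' box n, g x :=
        (measurePreserving_add_left volume v).setIntegral_preimage_emb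
          (measurableEmbedding_addLeft v) _ _
    _ = ∫ x in v +ᵥ box n, g x := rfl
    _ = ∫ x in v +ᵥ ZSpan.fundamentalDomain b, g x := setIntegral_congr_set haeq'.symm
    _ = ∫ x in ZSpan.fundamentalDomain b, g x := key
    _ = ∫ x in box n, g x := setIntegral_congr_set haeq


lemma pderiv1_contDiff {n : ℕ} (i : Fin n) {f : (Fin n → ℝ) → ℂ}
    (hf : ContDiff ℝ (⊤ : ℕ∞) f) : ContDiff ℝ (⊤ : ℕ∞) (pderiv1 n i f) := by
  have h1 : ContDiff ℝ (⊤ : ℕ∞) (fderiv ℝ f) := hf.fderiv_right (by simp)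
  exact h1.clm_apply contDiff_const

lemma pderiv1_periodic {n : ℕ} (i : Fin n) {f : (Fin n → ℝ) → ℂ}
    (hf : Differentiable ℝ f) (hp : IsPeriodic n f) : IsPeriodic n (pderiv1 n i f) := by
  intro x a
  unfold pderiv1
  set c : Fin n → ℝ := fun i => (a i : ℝ)
  have hcomp : HasFDerivAt (fun y => f (y + c)) (fderiv ℝ f (x + c)) x := by
    have h1 := (hf (x + c)).hasFDerivAt
    have h2 : HasFDerivAt (fun y : Fin n → ℝ => y + c)
        (ContinuousLinearMap.id ℝ (Fin n → ℝ)) x := (hasFDerivAt_id x).add_const c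
    have := h1.comp x h2; simp only [ContinuousLinearMap.comp_id] at this; exact this
  have h3 : (fun y => f (y + c)) = f := by funext y; exact hp y a
  rw [h3] at hcomp
  rw [hcomp.fderiv]


section expE
variable {n : ℕ} (m : Fin n → ℤ)

/-- The exponential kernel. -/
def eKer (n : ℕ) (m : Fin n → ℤ) : (Fin n → ℝ) → ℂ :=
  fun y => Complex.exp (-2 * π * Complex.I * ∑ j, (m j : ℂ) * (y j : ℂ))

lemma eKer_norm (y : Fin n → ℝ) : ‖eKer n m y‖ = 1 := by
  have h : ∑ j, (m j : ℂ) * (y j : ℂ) = ((∑ j, (m j : ℝ) * y j : ℝ) : ℂ) := by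
    push_cast; ring
  rw [eKer, h]
  have : (-2 * (π:ℂ) * Complex.I * ((∑ j, (m j : ℝ) * y j : ℝ) : ℂ)) =
      Complex.I * ((-2 * π * ∑ j, (m j : ℝ) * y j : ℝ) : ℂ) := by push_cast; ring
  rw [this]
  rw [Complex.norm_exp]
  simp [Complex.mul_re]

lemma eKer_continuous : Continuous (eKer n m) := by
  apply Complex.continuous_exp.comp
  exact (continuous_const.mul (continuous_finset_sum _ fun j _ =>
    continuous_const.mul (Complex.continuous_ofReal.comp (continuous_apply j))))

lemma eKer_periodic : IsPeriodic n (eKer n m) := by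
  intro y a
  unfold eKer
  have h : ∑ j, (m j : ℂ) * (((y + fun i => ((a i : ℤ) : ℝ)) j : ℝ) : ℂ)
      = (∑ j, (m j : ℂ) * (y j : ℂ)) + ((∑ j, m j * a j : ℤ) : ℂ) := by
    have h0 : ∀ j, (m j : ℂ) * (((y + fun i => ((a i : ℤ) : ℝ)) j : ℝ) : ℂ)
        = (m j : ℂ) * (y j : ℂ) + (m j : ℂ) * (a j : ℂ) := by
      intro j
      simp only [Pi.add_apply]
      push_cast
      ring
    rw [Finset.sum_congr rfl fun j _ => h0 j, Finset.sum_add_distrib]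
    congr 1
    push_cast
    rfl
  rw [h, mul_add, Complex.exp_add]
  have h2 : Complex.exp (-2 * π * Complex.I * ((∑ j, m j * a j : ℤ) : ℂ)) = 1 := by
    have : (-2 * (π:ℂ) * Complex.I * ((∑ j, m j * a j : ℤ) : ℂ))
        = ((-(∑ j, m j * a j) : ℤ) : ℂ) * (2 * π * Complex.I) := by push_cast; ring
    rw [this, Complex.exp_int_mul_two_pi_mul_I]
  rw [h2, mul_one]

lemma sum_shift (x : Fin n → ℝ) (t : ℝ) (i : Fin n) :
    ∑ j, (m j : ℂ) * (((x + t • (Pi.single i 1 : Fin n → ℝ)) j : ℝ) : ℂ)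
      = (∑ j, (m j : ℂ) * (x j : ℂ)) + (m i : ℂ) * (t : ℂ) := by
  have h0 : ∀ j, (m j : ℂ) * (((x + t • (Pi.single i 1 : Fin n → ℝ)) j : ℝ) : ℂ)
      = (m j : ℂ) * (x j : ℂ) + (m j : ℂ) * (t : ℂ) * (((Pi.single i 1 : Fin n → ℝ) j : ℝ) : ℂ) := by
    intro j
    simp only [Pi.add_apply, Pi.smul_apply, smul_eq_mul]
    push_cast
    ring
  rw [Finset.sum_congr rfl fun j _ => h0 j, Finset.sum_add_distrib]
  congr 1
  rw [Finset.sum_eq_single i]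
  · simp
  · intro j _ hj; simp [Pi.single_apply, hj]
  · simp

end expE


/-- Key integration by parts identity. -/
lemma fourierCo_pderiv1 {n : ℕ} {g : (Fin n → ℝ) → ℂ}
    (hg : ContDiff ℝ (⊤ : ℕ∞) g) (hper : IsPeriodic n g) (m : Fin n → ℤ) (i : Fin n) :
    fourierCo n (pderiv1 n i g) m = (2 * π * Complex.I * (m i : ℂ)) * fourierCo n g m := by
  classical
  set w : Fin n → ℝ := (Pi.single i 1 : Fin n → ℝ) with hw
  set φ : (Fin n → ℝ) → ℂ := fun y => g y * eKer n m y with hφ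
  have hφcont : Continuous φ := hg.continuous.mul (eKer_continuous m)
  have hφper : IsPeriodic n φ := by
    intro y a; rw [hφ]; simp only; rw [hper, eKer_periodic]
  have hgd : Differentiable ℝ g := hg.differentiable (by simp)
  have hpcont : Continuous (pderiv1 n i g) := (pderiv1_contDiff i hg).continuous
  set k : ℂ := -2 * π * Complex.I * (m i : ℂ) with hk
  set F : ℝ → (Fin n → ℝ) → ℂ := fun t x => φ (x + t • w) with hF
  set F' : ℝ → (Fin n → ℝ) → ℂ := fun t x =>
    pderiv1 n i g (x + t • w) * eKer n m (x + t • w) + φ (x + t • w) * k with hF'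
  -- derivative of t ↦ F t x
  have hderiv : ∀ (x : Fin n → ℝ) (t : ℝ), HasDerivAt (fun s => F s x) (F' t x) t := by
    intro x t
    have hψ : HasDerivAt (fun s : ℝ => x + s • w) w t := by
      simpa using ((hasDerivAt_id t).smul_const w).const_add x
    have hu : HasDerivAt (fun s : ℝ => g (x + s • w)) (pderiv1 n i g (x + t • w)) t := by
      have := (hgd (x + t • w)).hasFDerivAt.comp_hasDerivAt t hψ
      exact this
    set d : ℂ := -2 * π * Complex.I * ∑ j, (m j : ℂ) * (x j : ℂ) with hd
    have heq : ∀ s : ℝ, eKer n m (x + s • w) = Complex.exp (d + k * s) := by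
      intro s
      rw [eKer, hw, sum_shift m x s i]
      congr 1
      rw [hd, hk]
      ring
    have hecplx : ∀ z : ℂ, HasDerivAt (fun z : ℂ => Complex.exp (d + k * z))
        (Complex.exp (d + k * z) * k) z := by
      intro z
      have h1 : HasDerivAt (fun z : ℂ => d + k * z) k z := by
        simpa using ((hasDerivAt_id z).const_mul k).const_add d
      simpa using h1.cexp
    have he : HasDerivAt (fun s : ℝ => eKer n m (x + s • w))
        (eKer n m (x + t • w) * k) t := by
      have := (hecplx (t : ℂ)).comp_ofReal
      rw [show (fun y : ℝ => Complex.exp (d + k * y)) = fun s : ℝ => eKer n m (x + s • w)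
        from funext fun s => (heq s).symm] at this
      rw [heq t]
      exact this
    have := hu.mul he
    refine this.congr_deriv ?_
    simp only [hF', hφ]; ring
  -- F is constant in t
  have hconst : ∀ t : ℝ, (∫ x in box n, F t x) = fourierCo n g m := by
    intro t
    exact integral_box_translate hφper (t • w)
  -- bounds
  obtain ⟨B1, hB1, hB1'⟩ := periodic_bounded hg.continuous hper
  obtain ⟨B2, hB2, hB2'⟩ := periodic_bounded hpcont (pderiv1_periodic i hgd hper)
  have hFcont : ∀ t : ℝ, Continuous (F t) := fun t =>
    hφcont.comp (continuous_id.add continuous_const)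
  have hF'cont : ∀ t : ℝ, Continuous (F' t) := fun t => by
    apply Continuous.add
    · exact ((hpcont.comp (continuous_id.add continuous_const)).mul
        ((eKer_continuous m).comp (continuous_id.add continuous_const)))
    · exact (hφcont.comp (continuous_id.add continuous_const)).mul continuous_const
  have key := hasDerivAt_integral_of_dominated_loc_of_deriv_le (μ := volume.restrict (box n))
    (F := F) (F' := F') (x₀ := (0:ℝ)) (bound := fun _ => B2 + B1 * ‖k‖)
    (Filter.univ_mem)
    (Filter.Eventually.of_forall fun t => (hFcont t).aestronglyMeasurable)
    ((hFcont 0).continuousOn.integrableOn_compact (box_compact n))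
    ((hF'cont 0).aestronglyMeasurable)
    (Filter.Eventually.of_forall fun x => fun t _ => by
      rw [hF']
      calc ‖pderiv1 n i g (x + t • w) * eKer n m (x + t • w) + φ (x + t • w) * k‖
          ≤ ‖pderiv1 n i g (x + t • w) * eKer n m (x + t • w)‖ + ‖φ (x + t • w) * k‖ :=
            norm_add_le _ _
        _ = ‖pderiv1 n i g (x + t • w)‖ * ‖eKer n m (x + t • w)‖
            + ‖g (x + t • w)‖ * ‖eKer n m (x + t • w)‖ * ‖k‖ := by
            rw [norm_mul, hφ]; simp only; rw [norm_mul, norm_mul]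
        _ ≤ B2 * 1 + B1 * 1 * ‖k‖ := by
            rw [eKer_norm]
            gcongr <;> [exact hB2' _; exact hB1' _]
        _ = B2 + B1 * ‖k‖ := by ring)
    ((integrableOn_const (by rw [box_volume]; exact ENNReal.one_ne_top)))
    (Filter.Eventually.of_forall fun x => fun t _ => hderiv x t)
  obtain ⟨hint, hder⟩ := key
  have hzero : (∫ x in box n, F' 0 x) = 0 := by
    have h1 : (fun t => ∫ x in box n, F t x) = fun _ => fourierCo n g m :=
      funext hconst
    have h2 : HasDerivAt (fun _ : ℝ => fourierCo n g m) (∫ x in box n, F' 0 x) 0 := by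
      rw [← h1]; exact hder
    exact (h2.unique (hasDerivAt_const 0 _))
  have hF'0 : F' 0 = fun x => pderiv1 n i g x * eKer n m x + (g x * eKer n m x) * k := by
    funext x; rw [hF', hφ]; simp
  have hi1 : IntegrableOn (fun x => pderiv1 n i g x * eKer n m x) (box n) volume :=
    (hpcont.mul (eKer_continuous m)).continuousOn.integrableOn_compact (box_compact n)
  have hi2 : IntegrableOn (fun x => (g x * eKer n m x) * k) (box n) volume :=
    ((hg.continuous.mul (eKer_continuous m)).mul continuous_const
      ).continuousOn.integrableOn_compact (box_compact n)
  have hsplit : (∫ x in box n, F' 0 x)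
      = (∫ x in box n, pderiv1 n i g x * eKer n m x)
        + (∫ x in box n, (g x * eKer n m x) * k) := by
    rw [hF'0]
    exact integral_add hi1 hi2
  have hmulr : (∫ x in box n, (g x * eKer n m x) * k)
      = (∫ x in box n, g x * eKer n m x) * k := integral_mul_const k _
  have hco1 : fourierCo n (pderiv1 n i g) m = ∫ x in box n, pderiv1 n i g x * eKer n m x := rfl
  have hco2 : fourierCo n g m = ∫ x in box n, g x * eKer n m x := rfl
  rw [hsplit, hmulr, ← hco1, ← hco2] at hzero
  have : fourierCo n (pderiv1 n i g) m = -(fourierCo n g m * k) := by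
    linear_combination hzero
  rw [this, hk]
  ring


lemma fourierCo_pderiv1_iter {n : ℕ} {g : (Fin n → ℝ) → ℂ}
    (hg : ContDiff ℝ (⊤ : ℕ∞) g) (hper : IsPeriodic n g) (m : Fin n → ℤ) (i : Fin n) (r : ℕ) :
    ContDiff ℝ (⊤ : ℕ∞) ((pderiv1 n i)^[r] g) ∧ IsPeriodic n ((pderiv1 n i)^[r] g) ∧
    fourierCo n ((pderiv1 n i)^[r] g) m
      = (2 * π * Complex.I * (m i : ℂ))^r * fourierCo n g m := by
  induction r with
  | zero => exact ⟨hg, hper, by simp⟩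
  | succ r ih =>
    obtain ⟨h1, h2, h3⟩ := ih
    rw [Function.iterate_succ_apply']
    refine ⟨pderiv1_contDiff i h1,
      pderiv1_periodic i (h1.differentiable (by simp)) h2, ?_⟩
    rw [fourierCo_pderiv1 h1 h2 m i, h3, pow_succ]
    ring

lemma fourierCo_foldr {n : ℕ} (m : Fin n → ℤ) (S : Finset (Fin n)) (r : ℕ)
    (L : List (Fin n)) {g : (Fin n → ℝ) → ℂ}
    (hg : ContDiff ℝ (⊤ : ℕ∞) g) (hper : IsPeriodic n g) :
    ContDiff ℝ (⊤ : ℕ∞) (L.foldr (fun i h => if i ∈ S then (pderiv1 n i)^[r] h else h) g) ∧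
    IsPeriodic n (L.foldr (fun i h => if i ∈ S then (pderiv1 n i)^[r] h else h) g) ∧
    fourierCo n (L.foldr (fun i h => if i ∈ S then (pderiv1 n i)^[r] h else h) g) m
      = (L.map fun i => if i ∈ S then (2 * π * Complex.I * (m i : ℂ))^r else 1).prod
        * fourierCo n g m := by
  induction L with
  | nil => exact ⟨hg, hper, by simp⟩
  | cons a L ih =>
    obtain ⟨h1, h2, h3⟩ := ih
    simp only [List.foldr_cons, List.map_cons, List.prod_cons]
    by_cases ha : a ∈ S
    · simp only [ha, if_true]
      obtain ⟨g1, g2, g3⟩ := fourierCo_pderiv1_iter h1 h2 m a r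
      exact ⟨g1, g2, by rw [g3, h3]; ring⟩
    · simp only [ha, if_false]
      exact ⟨h1, h2, by rw [h3]; ring⟩

lemma fourierCo_bound {n : ℕ} {g : (Fin n → ℝ) → ℂ} (hg : Continuous g) (m : Fin n → ℤ)
    {C : ℝ} (hb : ∀ x, ‖g x‖ ≤ C) : ‖fourierCo n g m‖ ≤ C := by
  have h1 : ‖fourierCo n g m‖ ≤ C * (volume (box n)).toReal := by
    apply norm_setIntegral_le_of_norm_le_const
    · rw [box_volume]; exact ENNReal.one_lt_top
    · intro x _
      calc ‖g x * eKer n m x‖ = ‖g x‖ * ‖eKer n m x‖ := norm_mul _ _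
        _ = ‖g x‖ := by rw [eKer_norm]; ring
        _ ≤ C := hb x
  rw [box_volume] at h1
  simpa using h1

/-- If `f : ℝ^n → ℂ` is smooth and `ℤ^n`-periodic, `r ≥ 1`, and `C > 0` bounds
`|(∏_{i∈S} ∂^r/∂(x^i)^r) f(x)|` for all subsets `S ⊆ {1,…,n}` and all `x`, then
`|f̂_m| ≤ C·|N_m^r|` for all `m ∈ ℤ^n`. -/
theorem statement0 (n : ℕ) (f : (Fin n → ℝ) → ℂ)
    (hf : ContDiff ℝ (⊤ : ℕ∞) f) (hper : IsPeriodic n f)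
    (r : ℕ) (hr : 1 ≤ r) (C : ℝ) (hC : 0 < C)
    (hbound : ∀ (S : Finset (Fin n)) (x : Fin n → ℝ),
      ‖derivPowOn n r S f x‖ ≤ C) :
    ∀ m : Fin n → ℤ, ‖fourierCo n f m‖ ≤ C * ‖Nm n m ^ r‖ := by
  intro m
  classical
  set S : Finset (Fin n) := Finset.univ.filter (fun i => m i ≠ 0) with hS
  set g : (Fin n → ℝ) → ℂ := derivPowOn n r S f with hg
  obtain ⟨h1, h2, h3⟩ := fourierCo_foldr m S r (List.finRange n) hf hper
  -- the product over the list equals the product over S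
  have hprod : ((List.finRange n).map fun i =>
      if i ∈ S then (2 * π * Complex.I * (m i : ℂ))^r else 1).prod
      = ∏ i ∈ S, (2 * π * Complex.I * (m i : ℂ))^r := by
    rw [← Fin.prod_univ_def, Finset.prod_ite_mem, Finset.univ_inter]
  have hKey : fourierCo n g m
      = (∏ i ∈ S, (2 * π * Complex.I * (m i : ℂ))^r) * fourierCo n f m := by
    rw [hg, derivPowOn, h3, hprod]
  have hNm : Nm n m ^ r * (∏ i ∈ S, (2 * π * Complex.I * (m i : ℂ))^r) = 1 := by
    rw [Nm, ← Finset.prod_pow, ← Finset.prod_mul_distrib]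
    apply Finset.prod_eq_one
    intro i hi
    rw [← mul_pow]
    have hne : (2 * (π:ℂ) * Complex.I * (m i : ℂ)) ≠ 0 := by
      have hm : (m i : ℂ) ≠ 0 := by
        simp only [hS, Finset.mem_filter] at hi
        exact_mod_cast hi.2
      simp [Real.pi_ne_zero, Complex.I_ne_zero, hm]
    rw [one_div, inv_mul_cancel₀ hne, one_pow]
  have hf2 : fourierCo n f m = Nm n m ^ r * fourierCo n g m := by
    rw [hKey, ← mul_assoc, hNm, one_mul]
  have hgb : ∀ x, ‖g x‖ ≤ C := fun x => hbound S x
  have hgc : Continuous g := h1.continuous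
  calc ‖fourierCo n f m‖
      = ‖Nm n m ^ r‖ * ‖fourierCo n g m‖ := by
        rw [hf2, norm_mul]
    _ ≤ ‖Nm n m ^ r‖ * C := by
        gcongr
        exact fourierCo_bound hgc m hgb
    _ = C * ‖Nm n m ^ r‖ := mul_comm _ _
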